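/- Let Λ ⊂ ℝⁿ be a lattice, let b₁,…,bₙ ∈ Λ and q₁,…,qₙ ∈ {0,…,Q}, and let α ∈ ℝⁿ. Suppose the vectors (bᵢ, qᵢ) ∈ ℝ^{n+1} span an n-dimensional lattice hyperplane L of the lattice Λ' = Λ × ℤ, with primitive orthogonal dual vector (u*, z) ∈ Λ* × ℤ. Then |det(b₁ − q₁α, …, bₙ − qₙα)| ≥ det(Λ) · |u*·α + z|. -/

import Mathlib

open MeasureTheory Set Filter Pointwise

noncomputable section

/-- The lattice `B·ℤⁿ` generated by an invertible matrix `B`. -/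
def latticeOf {n : ℕ} (B : Matrix (Fin n) (Fin n) ℝ) : Set (Fin n → ℝ) :=
  {x | ∃ z : Fin n → ℤ, x = B.mulVec fun i => (z i : ℝ)}

/-- The periodic lattice `Λ(α,Q) = ⋃_{k=0}^{Q} (kα + Λ)`. -/
def periodicLattice {n : ℕ} (B : Matrix (Fin n) (Fin n) ℝ) (α : Fin n → ℝ) (Q : ℕ) :
    Set (Fin n → ℝ) :=
  {x | ∃ k : ℕ, k ≤ Q ∧ ∃ y ∈ latticeOf B, x = (k : ℝ) • α + y}

/-- The `i`-th successive minimum of a set `L` with respect to the body `K`. -/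
def succMin {n : ℕ} (L K : Set (Fin n → ℝ)) (i : ℕ) : ℝ :=
  sInf {l : ℝ | 0 ≤ l ∧ i ≤ Module.finrank ℝ (Submodule.span ℝ (L ∩ l • K))}

/-- The first successive minimum: smallest `l ≥ 0` with a nonzero point of `L` in `l • K`. -/
def firstMin {n : ℕ} (L K : Set (Fin n → ℝ)) : ℝ :=
  sInf {l : ℝ | 0 ≤ l ∧ ∃ x ∈ L, x ≠ 0 ∧ x ∈ l • K}

/-- The norm induced by a `0`-symmetric convex body `K`. -/
def normK {n : ℕ} (K : Set (Fin n → ℝ)) (x : Fin n → ℝ) : ℝ :=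
  sInf {l : ℝ | 0 ≤ l ∧ x ∈ l • K}

/-- The dual lattice of `latticeOf B`. -/
def dualLattice {n : ℕ} (B : Matrix (Fin n) (Fin n) ℝ) : Set (Fin n → ℝ) :=
  {u | ∀ y ∈ latticeOf B, ∃ z : ℤ, ∑ i, u i * y i = z}

/-- The density of a densest packing of translates of `K`: the supremum of upper
densities (computed with cubical windows) over all packings by translates of `K`. -/
def packingDensity {n : ℕ} (K : Set (Fin n → ℝ)) : ℝ :=
  sSup {d : ℝ | ∃ C : Set (Fin n → ℝ),
    (C.Pairwise fun c₁ c₂ =>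
      Disjoint (interior ((c₁ + ·) '' K)) (interior ((c₂ + ·) '' K))) ∧
    d = limsup (fun R : ℝ =>
      (volume ((⋃ c ∈ C, (c + ·) '' K) ∩ {x | ∀ i, |x i| ≤ R})).toReal /
        (volume {x : Fin n → ℝ | ∀ i, |x i| ≤ R}).toReal) atTop}

lemma det_snoc_helper {n : ℕ} (r : Fin n → Fin n → ℝ) (w : Fin n → ℝ) (c : ℝ) :
    (Matrix.of (Fin.snoc (fun i => Fin.snoc (r i) (0:ℝ)) (Fin.snoc w c))).det
      = (Matrix.of r).det * c := by
  rw [Matrix.det_succ_column _ (Fin.last n), Finset.sum_eq_single (Fin.last n)]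
  · have hsub : (Matrix.of (Fin.snoc (fun i => Fin.snoc (r i) (0:ℝ)) (Fin.snoc w c))).submatrix
        (Fin.last n).succAbove (Fin.last n).succAbove = Matrix.of r := by
      funext i j
      simp [Fin.succAbove_last, Matrix.submatrix_apply]
    rw [hsub]
    have h1 : (-1 : ℝ) ^ (((Fin.last n) : ℕ) + ((Fin.last n) : ℕ)) = 1 :=
      Even.neg_one_pow ⟨n, by simp⟩
    simp only [Matrix.of_apply, Fin.snoc_last, h1]
    ring
  · intro i _ hne
    obtain ⟨i', rfl⟩ := Fin.exists_castSucc_eq.2 hne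
    simp
  · intro h; exact absurd (Finset.mem_univ _) h

set_option maxHeartbeats 1000000

theorem stmt16 {n : ℕ} (B : Matrix (Fin n) (Fin n) ℝ) (hB : IsUnit B.det)
    (Q : ℕ) (b : Fin n → (Fin n → ℝ)) (hb : ∀ i, b i ∈ latticeOf B)
    (q : Fin n → ℕ) (hq : ∀ i, q i ≤ Q) (α : Fin n → ℝ)
    (hind : LinearIndependent ℝ fun i => (Fin.snoc (b i) ((q i : ℝ)) : Fin (n + 1) → ℝ))
    (u : Fin n → ℝ) (hu : u ∈ dualLattice B) (z : ℤ)
    (hortho : ∀ i, ∑ j, u j * b i j + (z : ℝ) * (q i : ℝ) = 0)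
    (hnz : ¬(u = 0 ∧ z = 0))
    (hprim : ¬∃ u' ∈ dualLattice B, ∃ z' : ℤ, ∃ k : ℕ, 2 ≤ k ∧
      u = (k : ℝ) • u' ∧ z = (k : ℤ) * z') :
    |Matrix.det (Matrix.of fun j i : Fin n => b i j - (q i : ℝ) * α j)| ≥
      |B.det| * |∑ j, u j * α j + (z : ℝ)| := by
  classical
  set col : Fin n → (Fin (n+1) → ℝ) := fun i => Fin.snoc (b i) ((q i : ℝ)) with hcoldef
  have hind' : LinearIndependent ℝ col := hind
  set wv : Fin (n+1) → ℝ := Fin.snoc u ((z : ℝ)) with hwdef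
  let g : (Fin (n+1) → ℝ) →ₗ[ℝ] ℝ :=
    { toFun := fun x => ∑ j, wv j * x j
      map_add' := fun x y => by simp [mul_add, Finset.sum_add_distrib]
      map_smul' := fun cc x => by simp [Finset.mul_sum, mul_left_comm] }
  have gdef : ∀ x, g x = ∑ j, wv j * x j := fun x => rfl
  have gsnoc : ∀ (y : Fin n → ℝ) (t : ℝ),
      g (Fin.snoc y t) = (∑ j, u j * y j) + (z:ℝ) * t := by
    intro y t
    rw [gdef, Fin.sum_univ_castSucc]
    simp [hwdef]
  have hgcol : ∀ i, g (col i) = 0 := by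
    intro i
    rw [hcoldef, gsnoc]
    exact hortho i
  -- lattice coordinates of the b i
  choose m hm using hb
  -- dual pairing values
  choose c hc using fun j => hu (B.mulVec fun i' => ((Pi.single j 1 : Fin n → ℤ) i' : ℝ))
    ⟨Pi.single j 1, rfl⟩
  have hc' : ∀ j, ∑ i, u i * B i j = (c j : ℝ) := by
    intro j
    rw [← hc j]
    refine Finset.sum_congr rfl fun i _ => ?_
    congr 1
    simp [Matrix.mulVec, dotProduct, Pi.single_apply]
  have key : ∀ m' : Fin n → ℤ,
      ∑ i, u i * (B.mulVec fun j => ((m' j : ℝ))) i = ∑ j, (m' j : ℝ) * (c j : ℝ) := by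
    intro m'
    simp only [Matrix.mulVec, dotProduct, Finset.mul_sum]
    rw [Finset.sum_comm]
    refine Finset.sum_congr rfl fun j _ => ?_
    rw [← hc' j, Finset.mul_sum]
    exact Finset.sum_congr rfl fun i _ => by ring
  set ct : Fin (n+1) → ℤ := Fin.snoc c z with hct
  -- the subgroup of values
  let S : AddSubgroup ℤ :=
    { carrier := {x | ∃ ζ : Fin (n+1) → ℤ, ∑ k, ζ k * ct k = x}
      add_mem' := by
        rintro x y ⟨ζ₁, h₁⟩ ⟨ζ₂, h₂⟩
        exact ⟨ζ₁ + ζ₂, by simp [add_mul, Finset.sum_add_distrib, h₁, h₂]⟩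
      zero_mem' := ⟨0, by simp⟩
      neg_mem' := by
        rintro x ⟨ζ, h⟩
        exact ⟨-ζ, by simp [← h, neg_mul, Finset.sum_neg_distrib]⟩ }
  have hrangeS : ∀ k, ct k ∈ S := by
    intro k
    exact ⟨Pi.single k 1, by simp [Pi.single_apply, ite_mul, Finset.sum_ite_eq']⟩
  obtain ⟨a, haH⟩ := Int.subgroup_cyclic (AddSubgroup.closure (Set.range ct))
  have hHS : AddSubgroup.closure (Set.range ct) ≤ S :=
    (AddSubgroup.closure_le S).2 (by rintro x ⟨k, rfl⟩; exact hrangeS k)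
  have hdvd0 : ∀ k, a ∣ ct k := by
    intro k
    have hk : ct k ∈ AddSubgroup.closure (Set.range ct) :=
      AddSubgroup.subset_closure ⟨k, rfl⟩
    rw [haH, AddSubgroup.mem_closure_singleton] at hk
    obtain ⟨t, ht⟩ := hk
    exact ⟨t, by rw [← ht, smul_eq_mul, mul_comm]⟩
  have haS : a ∈ S := hHS (by rw [haH]; exact AddSubgroup.subset_closure rfl)
  obtain ⟨ζ₀, hζ₀⟩ := haS
  have ha0 : a ≠ 0 := by
    rintro rfl
    have hz0 : z = 0 := by
      have h := (zero_dvd_iff).1 (hdvd0 (Fin.last n))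
      simpa [hct] using h
    have hc0 : ∀ j, c j = 0 := by
      intro j
      have h := (zero_dvd_iff).1 (hdvd0 (Fin.castSucc j))
      simpa [hct] using h
    have hvB : Matrix.vecMul u B = 0 := by
      funext j
      have h := hc' j
      rw [hc0 j] at h
      simpa [Matrix.vecMul, dotProduct] using h
    have hu0 : u = 0 := by
      calc u = Matrix.vecMul u 1 := (Matrix.vecMul_one u).symm
        _ = Matrix.vecMul u (B * B⁻¹) := by rw [Matrix.mul_nonsing_inv B hB]
        _ = Matrix.vecMul (Matrix.vecMul u B) B⁻¹ := by rw [Matrix.vecMul_vecMul]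
        _ = 0 := by rw [hvB, Matrix.zero_vecMul]
    exact hnz ⟨hu0, hz0⟩
  obtain ⟨a, hapos, hdvd, ζ, hζ⟩ : ∃ a : ℤ, 0 < a ∧ (∀ k, a ∣ ct k) ∧
      ∃ ζ : Fin (n+1) → ℤ, ∑ k, ζ k * ct k = a := by
    rcases ha0.lt_or_gt with h | h
    · exact ⟨-a, by omega, fun k => (neg_dvd).2 (hdvd0 k), -ζ₀,
        by simp [neg_mul, Finset.sum_neg_distrib, hζ₀]⟩
    · exact ⟨a, h, hdvd0, ζ₀, hζ₀⟩
  have hdvdz : a ∣ z := by simpa [hct] using hdvd (Fin.last n)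
  have hdvdc : ∀ j, a ∣ c j := by
    intro j
    simpa [hct] using hdvd (Fin.castSucc j)
  have ha1 : a = 1 := by
    by_contra hne
    have h2 : 2 ≤ a := by omega
    apply hprim
    choose d hd using hdvdc
    refine ⟨(a:ℝ)⁻¹ • u, ?_, z / a, a.toNat, by omega, ?_, ?_⟩
    · rintro y ⟨m', rfl⟩
      refine ⟨∑ j, m' j * d j, ?_⟩
      have h1 : ∑ i, ((a:ℝ)⁻¹ • u) i * (B.mulVec fun j => ((m' j : ℝ))) i
          = (a:ℝ)⁻¹ * ∑ j, (m' j : ℝ) * (c j : ℝ) := by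
        rw [← key m', Finset.mul_sum]
        refine Finset.sum_congr rfl fun i _ => ?_
        simp [mul_assoc]
      have h2' : ∑ j, (m' j : ℝ) * (c j : ℝ) = (a:ℝ) * ∑ j, (m' j : ℝ) * (d j : ℝ) := by
        rw [Finset.mul_sum]
        refine Finset.sum_congr rfl fun j _ => ?_
        rw [hd j]
        push_cast
        ring
      rw [h1, h2', ← mul_assoc, inv_mul_cancel₀ (by exact_mod_cast hapos.ne'), one_mul]
      push_cast
      rfl
    · have hta : ((a.toNat : ℕ) : ℝ) = (a : ℝ) := by
        exact_mod_cast congrArg (Int.cast : ℤ → ℝ) (Int.toNat_of_nonneg hapos.le)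
      rw [hta, smul_smul, mul_inv_cancel₀ (by exact_mod_cast hapos.ne'), one_smul]
    · rw [Int.toNat_of_nonneg hapos.le]
      exact (Int.mul_ediv_cancel' hdvdz).symm
  -- the auxiliary lattice vector v with g v = 1
  set Bp : Matrix (Fin (n+1)) (Fin (n+1)) ℝ :=
    Matrix.of (Fin.snoc (fun i => Fin.snoc (B i) (0:ℝ)) (Fin.snoc (0 : Fin n → ℝ) 1)) with hBp
  have hBpmul : ∀ (x : Fin n → ℝ) (t : ℝ),
      Bp.mulVec (Fin.snoc x t) = Fin.snoc (B.mulVec x) t := by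
    intro x t
    funext r
    refine Fin.lastCases ?_ ?_ r
    · simp [hBp, Matrix.mulVec, dotProduct, Fin.sum_univ_castSucc]
    · intro i
      simp [hBp, Matrix.mulVec, dotProduct, Fin.sum_univ_castSucc]
  have castsnoc : ∀ (ζ' : Fin (n+1) → ℤ), (fun k => ((ζ' k : ℝ)))
      = Fin.snoc (fun i => ((ζ' (Fin.castSucc i) : ℝ))) ((ζ' (Fin.last n) : ℝ)) := by
    intro ζ'
    funext k
    refine Fin.lastCases ?_ ?_ k <;> simp
  have keyg : ∀ ζ' : Fin (n+1) → ℤ,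
      g (Bp.mulVec fun k => ((ζ' k : ℝ))) = ∑ k, ((ζ' k : ℝ)) * ((ct k : ℝ)) := by
    intro ζ'
    rw [castsnoc ζ', hBpmul, gsnoc, key]
    rw [Fin.sum_univ_castSucc]
    simp [hct, mul_comm]
  set v : Fin (n+1) → ℝ := Bp.mulVec (fun k => ((ζ k : ℝ))) with hv
  have hgv : g v = 1 := by
    have hcast : ∑ k, ((ζ k : ℝ)) * ((ct k : ℝ)) = ((a:ℤ) : ℝ) := by
      exact_mod_cast congrArg (Int.cast : ℤ → ℝ) hζ
    rw [hv, keyg, hcast, ha1]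
    norm_num
  -- matrices
  set Zmat : Matrix (Fin (n+1)) (Fin (n+1)) ℤ :=
    Matrix.of (Fin.snoc (fun i => Fin.snoc (m i) ((q i : ℤ))) ζ) with hZ
  set N : Matrix (Fin (n+1)) (Fin (n+1)) ℝ := Matrix.of (Fin.snoc col v) with hN
  have hofrow : ∀ (F : Fin (n+1) → Fin (n+1) → ℝ) (r : Fin (n+1)), Matrix.of F r = F r :=
    fun _ _ => rfl
  have hofrowZ : ∀ (F : Fin (n+1) → Fin (n+1) → ℤ) (r : Fin (n+1)), Matrix.of F r = F r :=
    fun _ _ => rfl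
  have hNrow : ∀ r, N r = Bp.mulVec (fun k => ((Zmat r k : ℝ))) := by
    refine Fin.lastCases ?_ ?_
    · simp [hN, hZ, hv, hofrow, hofrowZ]
    · intro i
      have h1 : (fun k => ((Zmat (Fin.castSucc i) k : ℝ)))
          = Fin.snoc (fun j => ((m i j : ℝ))) ((q i : ℝ)) := by
        funext k
        refine Fin.lastCases ?_ ?_ k <;> simp [hZ, hofrowZ]
      simp only [hN, hofrow, Fin.snoc_castSucc, h1, hBpmul]
      rw [hcoldef, ← hm i]
  have hNfact : N = (Zmat.map (fun t : ℤ => (t:ℝ))) * Bp.transpose := by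
    funext r c'
    rw [Matrix.mul_apply]
    have h := congrFun (hNrow r) c'
    rw [h]
    simp [Matrix.mulVec, dotProduct, Matrix.transpose_apply, Matrix.map_apply, mul_comm]
  have hdetBp : Bp.det = B.det := by
    rw [hBp]
    exact (det_snoc_helper (fun i j => B i j) 0 1).trans (by rw [mul_one]; rfl)
  have hdetN : N.det = ((Zmat.det : ℤ) : ℝ) * B.det := by
    rw [hNfact, Matrix.det_mul, Matrix.det_transpose, hdetBp]
    congr 1
    have h := RingHom.map_det (Int.castRingHom ℝ) Zmat
    simpa [RingHom.mapMatrix_apply] using h.symm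
  -- the matrices M, E, R
  set α1 : Fin (n+1) → ℝ := Fin.snoc α 1 with hα1
  set Mm : Matrix (Fin (n+1)) (Fin (n+1)) ℝ := Matrix.of (Fin.snoc col α1) with hM
  set Rm : Matrix (Fin (n+1)) (Fin (n+1)) ℝ :=
    Matrix.of (Fin.snoc (fun i => Fin.snoc (fun j => b i j - (q i : ℝ) * α j) (0:ℝ)) α1) with hR
  set q' : Fin (n+1) → ℝ := Fin.snoc (fun i => ((q i : ℝ))) 0 with hq'
  set Em : Matrix (Fin (n+1)) (Fin (n+1)) ℝ :=
    Matrix.of (fun i k => (if k = i then (1:ℝ) else 0) +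
      (if k = Fin.last n then q' i else 0)) with hE
  have hMER : Mm = Em * Rm := by
    funext i j
    rw [Matrix.mul_apply]
    have hsum : ∑ k, Em i k * Rm k j = Rm i j + q' i * Rm (Fin.last n) j := by
      simp only [hE, Matrix.of_apply, add_mul, Finset.sum_add_distrib, ite_mul, one_mul, zero_mul]
      rw [Finset.sum_ite_eq' Finset.univ i (fun k => Rm k j),
        Finset.sum_ite_eq' Finset.univ (Fin.last n) (fun k => q' i * Rm k j)]
      simp
    rw [hsum]
    refine Fin.lastCases ?_ ?_ i
    · refine Fin.lastCases ?_ ?_ j <;>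
        simp [hM, hR, hq', hα1]
    · intro i'
      refine Fin.lastCases ?_ ?_ j
      · simp [hM, hR, hq', hα1, hcoldef]
      · intro j'
        simp [hM, hR, hq', hα1, hcoldef]
  have hdetE : Em.det = 1 := by
    rw [← Matrix.det_transpose]
    have hET : Em.transpose = Matrix.of (Fin.snoc
        (fun j => Fin.snoc (fun i => if i = j then (1:ℝ) else 0) 0)
        (Fin.snoc (fun i => ((q i : ℝ))) 1)) := by
      funext j i
      rw [Matrix.transpose_apply]
      refine Fin.lastCases ?_ ?_ j
      · refine Fin.lastCases ?_ ?_ i <;>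
          simp [hE, hq', (Fin.castSucc_lt_last _).ne, (Fin.castSucc_lt_last _).ne']
      · intro j'
        refine Fin.lastCases ?_ ?_ i <;>
          [skip; intro i'] <;>
          simp [hE, hq', (Fin.castSucc_lt_last _).ne, (Fin.castSucc_lt_last _).ne',
            Fin.castSucc_inj, eq_comm]
    rw [hET, det_snoc_helper, mul_one]
    have h1 : Matrix.of (fun j i : Fin n => if i = j then (1:ℝ) else 0)
        = (1 : Matrix (Fin n) (Fin n) ℝ) := by
      funext j i
      simp [Matrix.one_apply, eq_comm]
    rw [h1, Matrix.det_one]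
  have hdetR : Rm.det = (Matrix.of fun j i : Fin n => b i j - (q i : ℝ) * α j).det := by
    rw [hR, hα1, det_snoc_helper, mul_one]
    have heq : (Matrix.of fun j i : Fin n => b i j - (q i : ℝ) * α j)
        = (Matrix.of fun i j : Fin n => b i j - (q i : ℝ) * α j).transpose := rfl
    rw [heq, Matrix.det_transpose]
  -- the linear functional f
  let f : (Fin (n+1) → ℝ) →ₗ[ℝ] ℝ :=
    { toFun := fun x => (N.updateRow (Fin.last n) x).det
      map_add' := fun x y => Matrix.det_updateRow_add N (Fin.last n) x y
      map_smul' := fun cc x => Matrix.det_updateRow_smul N (Fin.last n) cc x }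
  have fdef : ∀ x, f x = (N.updateRow (Fin.last n) x).det := fun x => rfl
  have hupd : ∀ x, N.updateRow (Fin.last n) x = Matrix.of (Fin.snoc col x) := by
    intro x
    funext r
    refine Fin.lastCases ?_ ?_ r
    · simp [Matrix.updateRow_self, hofrow]
    · intro i
      simp [Matrix.updateRow_ne (Fin.castSucc_lt_last i).ne, hN, hofrow]
  have hfα1 : f α1 = Mm.det := by
    rw [fdef, hupd, hM]
  have hfv : f v = N.det := by
    rw [fdef, hupd, hN]
  have hfcol : ∀ i, f (col i) = 0 := by
    intro i
    rw [fdef, hupd]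
    refine Matrix.det_zero_of_row_eq (M := Matrix.of (Fin.snoc col (col i)))
      (i := Fin.castSucc i) (j := Fin.last n) (Fin.castSucc_lt_last i).ne ?_
    simp [hofrow]
  -- rank computations
  have hrange_top : LinearMap.range g = ⊤ := by
    rw [LinearMap.range_eq_top]
    intro r
    refine ⟨r • v, ?_⟩
    rw [_root_.map_smul, hgv, smul_eq_mul, mul_one]
  have hkerg : Module.finrank ℝ (LinearMap.ker g) = n := by
    have h := LinearMap.finrank_range_add_finrank_ker g
    rw [hrange_top, finrank_top, Module.finrank_self] at h
    have h2 : Module.finrank ℝ (Fin (n+1) → ℝ) = n + 1 := by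
      simp [Module.finrank_pi]
    omega
  have hsple : Submodule.span ℝ (Set.range col) ≤ LinearMap.ker g := by
    rw [Submodule.span_le]
    rintro x ⟨i, rfl⟩
    exact LinearMap.mem_ker.2 (hgcol i)
  have hspan : Submodule.span ℝ (Set.range col) = LinearMap.ker g := by
    apply Submodule.eq_of_le_of_finrank_eq hsple
    rw [hkerg, finrank_span_eq_card hind', Fintype.card_fin]
  have hfker : ∀ x ∈ LinearMap.ker g, f x = 0 := by
    intro x hx
    rw [← hspan] at hx
    have hle : Submodule.span ℝ (Set.range col) ≤ LinearMap.ker f := by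
      rw [Submodule.span_le]
      rintro y ⟨i, rfl⟩
      exact LinearMap.mem_ker.2 (hfcol i)
    exact LinearMap.mem_ker.1 (hle hx)
  have hmain : ∀ x, f x = g x * f v := by
    intro x
    have hx : x - g x • v ∈ LinearMap.ker g := by
      rw [LinearMap.mem_ker, map_sub, _root_.map_smul, hgv, smul_eq_mul, mul_one, sub_self]
    have h0 := hfker _ hx
    rw [map_sub, _root_.map_smul, smul_eq_mul] at h0
    linarith
  have hdetM : Mm.det = (∑ j, u j * α j + (z:ℝ)) * N.det := by
    rw [← hfα1, hmain α1, hfv]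
    congr 1
    rw [hα1, gsnoc]
    ring
  -- N is nonsingular
  have hNne : N.det ≠ 0 := by
    intro h0
    obtain ⟨d, hd0, hdN⟩ := Matrix.exists_vecMul_eq_zero_iff.2 h0
    have hvec : ∑ r, d r • N r = 0 := by
      funext c'
      simpa [Matrix.vecMul, dotProduct, Finset.sum_apply] using congrFun hdN c'
    have hg0 : ∑ r, d r * g (N r) = 0 := by
      have h := congrArg g hvec
      rw [map_sum, map_zero] at h
      simpa [_root_.map_smul, smul_eq_mul] using h
    have hlast : d (Fin.last n) = 0 := by
      rw [Fin.sum_univ_castSucc] at hg0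
      have hNc : ∀ i : Fin n, N (Fin.castSucc i) = col i := by
        intro i; simp [hN, hofrow]
      have hNl : N (Fin.last n) = v := by simp [hN, hofrow]
      rw [hNl, hgv, mul_one] at hg0
      have : ∑ i : Fin n, d (Fin.castSucc i) * g (N (Fin.castSucc i)) = 0 := by
        refine Finset.sum_eq_zero fun i _ => ?_
        rw [hNc i, hgcol i, mul_zero]
      linarith [hg0, this]
    have hinit : ∑ i : Fin n, d (Fin.castSucc i) • col i = 0 := by
      rw [Fin.sum_univ_castSucc] at hvec
      have hNl : N (Fin.last n) = v := by simp [hN, hofrow]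
      rw [hNl, hlast, zero_smul, add_zero] at hvec
      rw [← hvec]
      refine Finset.sum_congr rfl fun i _ => ?_
      congr 1
      simp [hN, hofrow]
    have hz' := Fintype.linearIndependent_iff.1 hind' (fun i => d (Fin.castSucc i)) hinit
    apply hd0
    funext r
    refine Fin.lastCases ?_ ?_ r
    · exact hlast
    · exact fun i => hz' i
  have hZne : Zmat.det ≠ 0 := by
    intro h
    apply hNne
    rw [hdetN, h]
    simp
  have hZ1 : (1:ℝ) ≤ |((Zmat.det : ℤ) : ℝ)| := by
    have h := Int.one_le_abs hZne
    exact_mod_cast h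
  -- conclusion
  have hMA : Mm.det = (Matrix.of fun j i : Fin n => b i j - (q i : ℝ) * α j).det := by
    rw [hMER, Matrix.det_mul, hdetE, one_mul, hdetR]
  rw [ge_iff_le, ← hMA, hdetM, hdetN]
  rw [abs_mul, abs_mul]
  have h1 : |B.det| * |∑ j, u j * α j + (z:ℝ)| * 1
      ≤ |B.det| * |∑ j, u j * α j + (z:ℝ)| * |((Zmat.det : ℤ) : ℝ)| := by
    exact mul_le_mul_of_nonneg_left hZ1 (mul_nonneg (abs_nonneg _) (abs_nonneg _))
  calc |B.det| * |∑ j, u j * α j + (z:ℝ)|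
      = |B.det| * |∑ j, u j * α j + (z:ℝ)| * 1 := by ring
    _ ≤ |B.det| * |∑ j, u j * α j + (z:ℝ)| * |((Zmat.det : ℤ) : ℝ)| := h1
    _ = |∑ j, u j * α j + (z:ℝ)| * (|((Zmat.det : ℤ) : ℝ)| * |B.det|) := by ring
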